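/- For every pair of distinct elements φ,ψ∈N̂ₙ, the node expression φ∧ψ is XP⁻-inconsistent, i.e., XP⁻⊢φ∧ψ≡⊥. -/

import Mathlib

attribute [local instance] Classical.propDecidable

mutual
/-- Path expressions of `XPath↓⁻` (no inequality tests in the language). -/
inductive PathExpr (A : Type) : Type
  | eps : PathExpr A
  | down : PathExpr A
  | test : NodeExpr A → PathExpr A
  | comp : PathExpr A → PathExpr A → PathExpr A
  | union : PathExpr A → PathExpr A → PathExpr A

/-- Node expressions of `XPath↓⁻` (no inequality tests in the language). -/
inductive NodeExpr (A : Type) : Type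
  | lab : A → NodeExpr A
  | neg : NodeExpr A → NodeExpr A
  | conj : NodeExpr A → NodeExpr A → NodeExpr A
  | diam : PathExpr A → NodeExpr A
  | eqTest : PathExpr A → PathExpr A → NodeExpr A
end

namespace XPathMinus

variable {A : Type}

/-- Defined disjunction `φ ∨ ψ := ¬(¬φ ∧ ¬ψ)`. -/
def nOr (φ ψ : NodeExpr A) : NodeExpr A := .neg (.conj (.neg φ) (.neg ψ))

/-- `⊤ := ⟨ε⟩`. -/
def topN : NodeExpr A := .diam .eps

/-- `⊥ := ¬⊤`. -/
def botN : NodeExpr A := .neg topN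

/-- `⊥̄ := [¬⟨ε⟩]`. -/
def botP : PathExpr A := .test (.neg (.diam .eps))

def bigOr (l : List (NodeExpr A)) : NodeExpr A := l.foldr nOr botN

def bigUnion (l : List (PathExpr A)) : PathExpr A := l.foldr PathExpr.union botP

/-- A data tree: a tree (connected, acyclic, unique parents except the root)
whose nodes carry labels from `A`, together with a partition of the nodes
(presented as an equivalence relation `eqd`). -/
structure DataTree (A : Type) where
  X : Type
  child : X → X → Prop
  root : X
  label : X → A
  eqd : X → X → Prop
  eqd_equiv : Equivalence eqd
  parent_unique : ∀ ⦃x y z : X⦄, child x z → child y z → x = y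
  root_no_parent : ∀ x : X, ¬ child x root
  reach : ∀ x : X, Relation.ReflTransGen child root x
  acyclic : ∀ x : X, ¬ Relation.TransGen child x x

mutual
/-- Semantics of path expressions. -/
def psem (T : DataTree A) : PathExpr A → T.X → T.X → Prop
  | .eps, x, y => x = y
  | .down, x, y => T.child x y
  | .test φ, x, y => x = y ∧ nsem T φ x
  | .comp α β, x, z => ∃ y, psem T α x y ∧ psem T β y z
  | .union α β, x, y => psem T α x y ∨ psem T β x y

/-- Semantics of node expressions. -/
def nsem (T : DataTree A) : NodeExpr A → T.X → Prop
  | .lab a, x => T.label x = a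
  | .neg φ, x => ¬ nsem T φ x
  | .conj φ ψ, x => nsem T φ x ∧ nsem T ψ x
  | .diam α, x => ∃ y, psem T α x y
  | .eqTest α β, x => ∃ y z, psem T α x y ∧ psem T β x z ∧ T.eqd y z
end

/-- Semantic equivalence of node expressions: same denotation in every data tree. -/
def nodeValid (φ ψ : NodeExpr A) : Prop :=
  ∀ (T : DataTree A) (x : T.X), nsem T φ x ↔ nsem T ψ x

/-- Semantic equivalence of path expressions: same denotation in every data tree. -/
def pathValid (α β : PathExpr A) : Prop :=
  ∀ (T : DataTree A) (x y : T.X), psem T α x y ↔ psem T β x y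

mutual
/-- Derivability of node equivalences in the axiomatic system `XP⁻`. -/
inductive NDer {A : Type} [Fintype A] : NodeExpr A → NodeExpr A → Prop
  | refl (φ : NodeExpr A) : NDer φ φ
  | symm {φ ψ : NodeExpr A} : NDer φ ψ → NDer ψ φ
  | trans {φ ψ ρ : NodeExpr A} : NDer φ ψ → NDer ψ ρ → NDer φ ρ
  | congr_neg {φ ψ : NodeExpr A} : NDer φ ψ → NDer (.neg φ) (.neg ψ)
  | congr_conj {φ φ' ψ ψ' : NodeExpr A} :
      NDer φ φ' → NDer ψ ψ' → NDer (.conj φ ψ) (.conj φ' ψ')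
  | congr_diam {α β : PathExpr A} : PDer α β → NDer (.diam α) (.diam β)
  | congr_eqTest {α α' β β' : PathExpr A} :
      PDer α α' → PDer β β' → NDer (.eqTest α β) (.eqTest α' β')
  | lbAx1 : NDer topN (bigOr ((Finset.univ : Finset A).toList.map NodeExpr.lab))
  | lbAx2 {a b : A} : a ≠ b → NDer botN (.conj (.lab a) (.lab b))
  | ndAx1 (φ ψ : NodeExpr A) :
      NDer φ (nOr (.neg (nOr (.neg φ) ψ)) (.neg (nOr (.neg φ) (.neg ψ))))
  | ndAx2 (φ : NodeExpr A) : NDer (.diam (.test φ)) φ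
  | ndAx3 (α β : PathExpr A) : NDer (.diam (.union α β)) (nOr (.diam α) (.diam β))
  | ndAx4 (α β : PathExpr A) : NDer (.diam (.comp α β)) (.diam (.comp α (.test (.diam β))))
  | eqAx1 (α β : PathExpr A) : NDer (.eqTest α β) (.eqTest β α)
  | eqAx2 (α β γ : PathExpr A) :
      NDer (.eqTest (.union α β) γ) (nOr (.eqTest α γ) (.eqTest β γ))
  | eqAx3 (φ : NodeExpr A) (α β : PathExpr A) :
      NDer (.conj φ (.eqTest α β)) (.eqTest (.comp (.test φ) α) β)
  | eqAx4 (α β : PathExpr A) : NDer (nOr (.eqTest α β) (.diam α)) (.diam α)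
  | eqAx5 (γ α β : PathExpr A) :
      NDer (nOr (.diam (.comp γ (.test (.eqTest α β)))) (.eqTest (.comp γ α) (.comp γ β)))
        (.eqTest (.comp γ α) (.comp γ β))
  | eqAx6 (α : PathExpr A) : NDer (.eqTest α α) (.diam α)
  | eqAx7 (α β : PathExpr A) :
      NDer (nOr (.conj (.eqTest α .eps) (.eqTest β .eps)) (.eqTest α β)) (.eqTest α β)
  | eqAx8 (α β γ : PathExpr A) :
      NDer (nOr (.eqTest α (.comp β (.test (.eqTest .eps γ)))) (.eqTest α (.comp β γ)))
        (.eqTest α (.comp β γ))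

/-- Derivability of path equivalences in the axiomatic system `XP⁻`. -/
inductive PDer {A : Type} [Fintype A] : PathExpr A → PathExpr A → Prop
  | refl (α : PathExpr A) : PDer α α
  | symm {α β : PathExpr A} : PDer α β → PDer β α
  | trans {α β γ : PathExpr A} : PDer α β → PDer β γ → PDer α γ
  | congr_test {φ ψ : NodeExpr A} : NDer φ ψ → PDer (.test φ) (.test ψ)
  | congr_comp {α α' β β' : PathExpr A} :
      PDer α α' → PDer β β' → PDer (.comp α β) (.comp α' β')
  | congr_union {α α' β β' : PathExpr A} :
      PDer α α' → PDer β β' → PDer (.union α β) (.union α' β')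
  | prAx1 (α β : PathExpr A) : PDer (.comp (.comp α (.test (.neg (.diam β)))) β) botP
  | prAx2 : PDer (.test topN) (.eps : PathExpr A)
  | prAx3 (φ ψ : NodeExpr A) : PDer (.test (nOr φ ψ)) (.union (.test φ) (.test ψ))
  | isAx1 (α β γ : PathExpr A) : PDer (.union (.union α β) γ) (.union α (.union β γ))
  | isAx2 (α β : PathExpr A) : PDer (.union α β) (.union β α)
  | isAx3 (α : PathExpr A) : PDer (.union α α) α
  | isAx4 (α β γ : PathExpr A) : PDer (.comp α (.comp β γ)) (.comp (.comp α β) γ)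
  | isAx5l (α : PathExpr A) : PDer (.comp .eps α) α
  | isAx5r (α : PathExpr A) : PDer (.comp α .eps) α
  | isAx6l (α β γ : PathExpr A) :
      PDer (.comp α (.union β γ)) (.union (.comp α β) (.comp α γ))
  | isAx6r (α β γ : PathExpr A) :
      PDer (.comp (.union α β) γ) (.union (.comp α γ) (.comp β γ))
  | isAx7 (α : PathExpr A) : PDer (.union botP α) α
end

/-- A node expression is `XP⁻`-consistent if it is not provably equivalent to `⊥`. -/
def NConsistent [Fintype A] (φ : NodeExpr A) : Prop := ¬ NDer φ botN

/-- A path expression is `XP⁻`-consistent if it is not provably equivalent to `⊥̄`. -/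
def PConsistent [Fintype A] (α : PathExpr A) : Prop := ¬ PDer α botP

/-- The normal form `a ∧ ⋀_{d ∈ C} d ∧ ⋀_{d ∈ D∖C} ¬d`, built along the canonical listing `D`. -/
noncomputable def mkNF (a : A) (C D : List (NodeExpr A)) : NodeExpr A :=
  D.foldl (fun acc d => .conj acc (if d ∈ C then d else .neg d)) (.lab a)

/-- The canonical lists of normal-form path expressions (first component)
and normal-form node expressions (second component) at each level. -/
noncomputable def NF (A : Type) [Fintype A] : ℕ → List (PathExpr A) × List (NodeExpr A)
  | 0 =>
    ([.eps],
      (Finset.univ : Finset A).toList.map fun a =>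
        NodeExpr.conj (.lab a) (.eqTest .eps .eps))
  | n+1 =>
    let P := (NF A n).1
    let N := (NF A n).2
    let P' : List (PathExpr A) :=
      .eps :: N.flatMap fun ψ => P.map fun β => PathExpr.comp .down (.comp (.test ψ) β)
    let D : List (NodeExpr A) :=
      P'.flatMap fun α => P'.map fun β => NodeExpr.eqTest α β
    let cands : List (NodeExpr A) :=
      D.sublists.flatMap fun C => (Finset.univ : Finset A).toList.map fun a => mkNF a C D
    (P', cands.filter fun φ => decide (NConsistent φ))

/-- `P̂ₙ`: normal-form path expressions of level `n`. -/
noncomputable def Pnf (A : Type) [Fintype A] (n : ℕ) : Set (PathExpr A) :=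
  {α | α ∈ (NF A n).1}

/-- `N̂ₙ`: normal-form node expressions of level `n`. -/
noncomputable def Nnf (A : Type) [Fintype A] (n : ℕ) : Set (NodeExpr A) :=
  {φ | φ ∈ (NF A n).2}

/-- `D̂ₙ`: data-aware diamonds between normal-form paths of level `n`. -/
noncomputable def Dnf (A : Type) [Fintype A] (n : ℕ) : Set (NodeExpr A) :=
  {φ | ∃ α ∈ Pnf A n, ∃ β ∈ Pnf A n, φ = NodeExpr.eqTest α β}

/-- The conjuncts of a node expression (flattening `∧`). -/
def conjuncts : NodeExpr A → List (NodeExpr A)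
  | .conj φ ψ => conjuncts φ ++ conjuncts ψ
  | φ => [φ]

/-- `δ` is a conjunct of `ψ`. -/
def IsConjunct (δ ψ : NodeExpr A) : Prop := δ ∈ conjuncts ψ

/-- Length of a path expression. -/
def plen : PathExpr A → ℕ
  | .eps => 0
  | .down => 1
  | .test _ => 0
  | .comp α β => plen α + plen β
  | .union α β => max (plen α) (plen β)

mutual
/-- Downward depth of a node expression. -/
def ndd : NodeExpr A → ℕ
  | .lab _ => 0
  | .neg φ => ndd φ
  | .conj φ ψ => max (ndd φ) (ndd ψ)
  | .diam α => pdd α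
  | .eqTest α β => max (pdd α) (pdd β)

/-- Downward depth of a path expression. -/
def pdd : PathExpr A → ℕ
  | .eps => 0
  | .down => 1
  | .test φ => ndd φ
  | .comp α β => max (max (pdd α) (pdd β)) (plen α + pdd β)
  | .union α β => max (pdd α) (pdd β)
end

/-- The path `↓[ψ]α`. -/
def dPath (ψ : NodeExpr A) (α : PathExpr A) : PathExpr A :=
  .comp .down (.comp (.test ψ) α)

/-- A path expression whose leftmost symbol is `↓`. -/
def startsWithDown : PathExpr A → Prop
  | .down => True
  | .comp α _ => startsWithDown α
  | _ => False

end XPathMinus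

namespace XPathMinus

variable {A : Type} [Fintype A]

/-- Congruence for the defined disjunction. -/
lemma congr_or {a a' b b' : NodeExpr A} (h1 : NDer a a') (h2 : NDer b b') :
    NDer (nOr a b) (nOr a' b') :=
  NDer.congr_neg (NDer.congr_conj (NDer.congr_neg h1) (NDer.congr_neg h2))

/-- `φ ∨ ψ ≡ ⟨[φ] ∪ [ψ]⟩`. -/
lemma diam_or (φ ψ : NodeExpr A) :
    NDer (nOr φ ψ) (NodeExpr.diam (PathExpr.union (.test φ) (.test ψ))) :=
  (NDer.ndAx2 (nOr φ ψ)).symm.trans (NDer.congr_diam (PDer.prAx3 φ ψ))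

lemma orComm (φ ψ : NodeExpr A) : NDer (nOr φ ψ) (nOr ψ φ) :=
  (diam_or φ ψ).trans ((NDer.congr_diam (PDer.isAx2 _ _)).trans (diam_or ψ φ).symm)

lemma orAssoc (φ ψ χ : NodeExpr A) :
    NDer (nOr (nOr φ ψ) χ) (nOr φ (nOr ψ χ)) :=
  (diam_or (nOr φ ψ) χ).trans
    ((NDer.congr_diam (PDer.congr_union (PDer.prAx3 φ ψ) (PDer.refl _))).trans
      ((NDer.congr_diam (PDer.isAx1 _ _ _)).trans
        ((NDer.congr_diam (PDer.congr_union (PDer.refl _) (PDer.prAx3 ψ χ).symm)).trans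
          (diam_or φ (nOr ψ χ)).symm)))

lemma orIdem (φ : NodeExpr A) : NDer (nOr φ φ) φ :=
  (diam_or φ φ).trans ((NDer.congr_diam (PDer.isAx3 _)).trans (NDer.ndAx2 φ))

lemma orBotR (φ : NodeExpr A) : NDer (nOr φ botN) φ :=
  (diam_or φ botN).trans
    ((NDer.congr_diam ((PDer.isAx2 _ _).trans (PDer.isAx7 _))).trans (NDer.ndAx2 φ))

lemma orBotL (φ : NodeExpr A) : NDer (nOr botN φ) φ :=
  (orComm botN φ).trans (orBotR φ)

/-- `⊤ ≡ ¬z ∨ ¬¬z`. -/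
lemma compl_sum (z : NodeExpr A) :
    NDer topN (nOr (NodeExpr.neg z) (NodeExpr.neg (NodeExpr.neg z))) :=
  (NDer.ndAx1 topN z).trans
    (congr_or (NDer.congr_neg (orBotL z)) (NDer.congr_neg (orBotL (NodeExpr.neg z))))

/-- Double negation elimination. -/
lemma dne (x : NodeExpr A) : NDer (NodeExpr.neg (NodeExpr.neg x)) x :=
  (((NDer.ndAx1 x (NodeExpr.neg x)).trans
    (congr_or (NDer.congr_neg (orIdem (NodeExpr.neg x)))
      (NDer.congr_neg (compl_sum x).symm))).trans (orBotR _)).symm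

/-- Excluded middle: `x ∨ ¬x ≡ ⊤`. -/
lemma em' (x : NodeExpr A) : NDer (nOr x (NodeExpr.neg x)) topN :=
  (((compl_sum x).trans (congr_or (NDer.refl _) (dne x))).trans
    (orComm (NodeExpr.neg x) x)).symm

lemma orTop (x : NodeExpr A) : NDer (nOr x topN) topN :=
  (congr_or (NDer.refl x) (em' x).symm).trans
    ((orAssoc x x (NodeExpr.neg x)).symm.trans
      ((congr_or (orIdem x) (NDer.refl _)).trans (em' x)))

/-- `x ∧ y ≡ ¬(¬x ∨ ¬y)`. -/
lemma conj_nor (x y : NodeExpr A) :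
    NDer (NodeExpr.conj x y) (NodeExpr.neg (nOr (NodeExpr.neg x) (NodeExpr.neg y))) :=
  ((dne (NodeExpr.conj (NodeExpr.neg (NodeExpr.neg x)) (NodeExpr.neg (NodeExpr.neg y)))).trans
    (NDer.congr_conj (dne x) (dne y))).symm

lemma neg_conj (x y : NodeExpr A) :
    NDer (NodeExpr.neg (NodeExpr.conj x y)) (nOr (NodeExpr.neg x) (NodeExpr.neg y)) :=
  (NDer.congr_neg (conj_nor x y)).trans (dne _)

lemma andComm (x y : NodeExpr A) : NDer (NodeExpr.conj x y) (NodeExpr.conj y x) :=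
  (conj_nor x y).trans ((NDer.congr_neg (orComm _ _)).trans (conj_nor y x).symm)

lemma andAssoc (x y z : NodeExpr A) :
    NDer (NodeExpr.conj (NodeExpr.conj x y) z) (NodeExpr.conj x (NodeExpr.conj y z)) :=
  (conj_nor (NodeExpr.conj x y) z).trans
    ((NDer.congr_neg (congr_or (neg_conj x y) (NDer.refl _))).trans
      ((NDer.congr_neg (orAssoc _ _ _)).trans
        ((NDer.congr_neg (congr_or (NDer.refl _) (neg_conj y z).symm)).trans
          (conj_nor x (NodeExpr.conj y z)).symm)))

lemma andIdem (x : NodeExpr A) : NDer (NodeExpr.conj x x) x :=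
  (conj_nor x x).trans ((NDer.congr_neg (orIdem _)).trans (dne x))

lemma andBotR (x : NodeExpr A) : NDer (NodeExpr.conj x botN) botN :=
  (conj_nor x botN).trans
    (NDer.congr_neg ((congr_or (NDer.refl _) (dne topN)).trans (orTop _)))

/-- `x ∧ ¬x ≡ ⊥`. -/
lemma contraR (x : NodeExpr A) : NDer (NodeExpr.conj x (NodeExpr.neg x)) botN :=
  (conj_nor x (NodeExpr.neg x)).trans (NDer.congr_neg (compl_sum x).symm)

/-- `¬x ∧ x ≡ ⊥`. -/
lemma contraL (x : NodeExpr A) : NDer (NodeExpr.conj (NodeExpr.neg x) x) botN :=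
  (andComm _ _).trans (contraR x)

/-- Absorption of a conjunct: if `δ` is a conjunct of `φ` then `φ ≡ φ ∧ δ`. -/
lemma absorb : ∀ (φ δ : NodeExpr A), δ ∈ conjuncts φ → NDer φ (NodeExpr.conj φ δ)
  | .conj φ1 φ2, δ, h => by
    have h' : δ ∈ conjuncts φ1 ++ conjuncts φ2 := h
    rcases List.mem_append.1 h' with h1 | h2
    · exact (NDer.congr_conj (absorb φ1 δ h1) (NDer.refl φ2)).trans
        ((andAssoc _ _ _).trans
          ((NDer.congr_conj (NDer.refl _) (andComm _ _)).trans (andAssoc _ _ _).symm))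
    · exact (NDer.congr_conj (NDer.refl φ1) (absorb φ2 δ h2)).trans (andAssoc _ _ _).symm
  | .lab a, δ, h => by
    have h' : δ ∈ [NodeExpr.lab a] := h
    rcases List.mem_singleton.1 h' with rfl
    exact (andIdem _).symm
  | .neg χ, δ, h => by
    have h' : δ ∈ [NodeExpr.neg χ] := h
    rcases List.mem_singleton.1 h' with rfl
    exact (andIdem _).symm
  | .diam α, δ, h => by
    have h' : δ ∈ [NodeExpr.diam α] := h
    rcases List.mem_singleton.1 h' with rfl
    exact (andIdem _).symm
  | .eqTest α β, δ, h => by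
    have h' : δ ∈ [NodeExpr.eqTest α β] := h
    rcases List.mem_singleton.1 h' with rfl
    exact (andIdem _).symm

/-- If some conjunct of `φ` contradicts some conjunct of `ψ`, then `φ ∧ ψ ≡ ⊥`. -/
lemma combo {φ ψ δ δ' : NodeExpr A} (h1 : δ ∈ conjuncts φ) (h2 : δ' ∈ conjuncts ψ)
    (h3 : NDer (NodeExpr.conj δ δ') botN) : NDer (NodeExpr.conj φ ψ) botN := by
  have inner : NDer (NodeExpr.conj δ (NodeExpr.conj ψ δ')) botN :=
    (andAssoc δ ψ δ').symm.trans
      ((NDer.congr_conj (andComm δ ψ) (NDer.refl _)).trans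
        ((andAssoc ψ δ δ').trans
          ((NDer.congr_conj (NDer.refl ψ) h3).trans (andBotR ψ))))
  exact (NDer.congr_conj (absorb φ δ h1) (absorb ψ δ' h2)).trans
    ((andAssoc φ δ (NodeExpr.conj ψ δ')).trans
      ((NDer.congr_conj (NDer.refl φ) inner).trans (andBotR φ)))

/-- The conjuncts of the seed survive the `mkNF` fold. -/
lemma conjuncts_foldl_mono (f : NodeExpr A → NodeExpr A) :
    ∀ (D : List (NodeExpr A)) (init : NodeExpr A),
      conjuncts init ⊆
        conjuncts (D.foldl (fun acc d => NodeExpr.conj acc (f d)) init)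
  | [], _ => fun _ hx => hx
  | d :: D, init => by
    simp only [List.foldl_cons]
    intro x hx
    refine conjuncts_foldl_mono f D (NodeExpr.conj init (f d)) ?_
    have : conjuncts (NodeExpr.conj init (f d)) = conjuncts init ++ conjuncts (f d) := rfl
    rw [this]
    exact List.mem_append_left _ hx

lemma conjuncts_foldl_mem (f : NodeExpr A → NodeExpr A) :
    ∀ (D : List (NodeExpr A)) (init d : NodeExpr A), d ∈ D → f d ∈ conjuncts (f d) →
      f d ∈ conjuncts (D.foldl (fun acc d => NodeExpr.conj acc (f d)) init)
  | [], _, d, hd, _ => absurd hd List.not_mem_nil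
  | d' :: D, init, d, hd, hf => by
    simp only [List.foldl_cons]
    rcases List.mem_cons.1 hd with rfl | hd'
    · refine conjuncts_foldl_mono f D (NodeExpr.conj init (f d)) ?_
      have : conjuncts (NodeExpr.conj init (f d)) = conjuncts init ++ conjuncts (f d) := rfl
      rw [this]
      exact List.mem_append_right _ hf
    · exact conjuncts_foldl_mem f D (NodeExpr.conj init (f d')) d hd' hf

lemma foldl_congr_conj (f g : NodeExpr A → NodeExpr A) :
    ∀ (D : List (NodeExpr A)) (init : NodeExpr A), (∀ d ∈ D, f d = g d) →
      D.foldl (fun acc d => NodeExpr.conj acc (f d)) init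
        = D.foldl (fun acc d => NodeExpr.conj acc (g d)) init
  | [], _, _ => rfl
  | d :: D, init, h => by
    simp only [List.foldl_cons, h d List.mem_cons_self]
    exact foldl_congr_conj f g D _ fun d' hd' => h d' (List.mem_cons_of_mem _ hd')

lemma lab_mem_conjuncts_mkNF (a : A) (C D : List (NodeExpr A)) :
    NodeExpr.lab a ∈ conjuncts (mkNF a C D) :=
  conjuncts_foldl_mono (fun d => if d ∈ C then d else NodeExpr.neg d) D (NodeExpr.lab a)
    (List.mem_singleton.2 rfl)

end XPathMinus

/-- Distinct normal forms of the same level are jointly `XP⁻`-inconsistent. -/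
theorem XPathMinus.distinct_nf_inconsistent {A : Type} [Fintype A]
    (hA : 1 < Fintype.card A) (n : ℕ) (φ ψ : NodeExpr A)
    (hφ : φ ∈ Nnf A n) (hψ : ψ ∈ Nnf A n) (hne : φ ≠ ψ) :
    NDer (NodeExpr.conj φ ψ) botN := by
  clear hA
  cases n with
  | zero =>
    simp only [Nnf, NF, Set.mem_setOf_eq, List.mem_map] at hφ hψ
    obtain ⟨a, -, rfl⟩ := hφ
    obtain ⟨b, -, rfl⟩ := hψ
    have hab : a ≠ b := fun h => hne (by rw [h])
    exact combo List.mem_cons_self List.mem_cons_self (NDer.lbAx2 hab).symm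
  | succ n =>
    simp only [Nnf, NF, Set.mem_setOf_eq, List.mem_filter, List.mem_flatMap,
      List.mem_map] at hφ hψ
    obtain ⟨⟨C, hC, a, -, rfl⟩, -⟩ := hφ
    obtain ⟨⟨C', hC', b, -, rfl⟩, -⟩ := hψ
    by_cases hab : a = b
    · subst hab
      set P' : List (PathExpr A) :=
        .eps :: (NF A n).2.flatMap fun ψ => (NF A n).1.map fun β =>
          PathExpr.comp .down (.comp (.test ψ) β) with hP'
      set D : List (NodeExpr A) :=
        P'.flatMap fun α => P'.map fun β => NodeExpr.eqTest α β with hD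
      have hdiff : ¬ ∀ d ∈ D,
          (if d ∈ C then d else NodeExpr.neg d) = (if d ∈ C' then d else NodeExpr.neg d) := by
        intro hall
        exact hne (foldl_congr_conj _ _ D (NodeExpr.lab a) hall)
      push_neg at hdiff
      obtain ⟨d, hdD, hd⟩ := hdiff
      have hdself : d ∈ conjuncts d := by
        rw [hD] at hdD
        simp only [List.mem_flatMap, List.mem_map] at hdD
        obtain ⟨α, -, β, -, rfl⟩ := hdD
        exact List.mem_singleton.2 rfl
      have hmem : ∀ (C₀ : List (NodeExpr A)),
          (if d ∈ C₀ then d else NodeExpr.neg d) ∈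
            conjuncts (mkNF a C₀ D) := by
        intro C₀
        refine conjuncts_foldl_mem (fun d => if d ∈ C₀ then d else NodeExpr.neg d)
          D (NodeExpr.lab a) d hdD ?_
        show (if d ∈ C₀ then d else NodeExpr.neg d) ∈
          conjuncts (if d ∈ C₀ then d else NodeExpr.neg d)
        by_cases h0 : d ∈ C₀
        · rw [if_pos h0]; exact hdself
        · rw [if_neg h0]; exact List.mem_singleton.2 rfl
      have hmem1 := hmem C
      have hmem2 := hmem C'
      by_cases h1 : d ∈ C <;> by_cases h2 : d ∈ C'
      · rw [if_pos h1, if_pos h2] at hd; exact absurd rfl hd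
      · rw [if_pos h1] at hmem1
        rw [if_neg h2] at hmem2
        exact combo hmem1 hmem2 (contraR d)
      · rw [if_neg h1] at hmem1
        rw [if_pos h2] at hmem2
        exact combo hmem1 hmem2 (contraL d)
      · rw [if_neg h1, if_neg h2] at hd; exact absurd rfl hd
    · exact combo (lab_mem_conjuncts_mkNF a C _) (lab_mem_conjuncts_mkNF b C' _)
        (NDer.lbAx2 hab).symm
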